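/- Let D be a finite division ring (hence a finite field), I a set, and F a filter on I which is not the intersection of finitely many ultrafilters on I. Then dim_D(D^I/F) = card(D^I/F). -/

import Mathlib

universe u

/-- The `D`-subspace of `D^I` of elements vanishing on a member of the filter
`F`; the quotient by it is the reduced power `D^I/F` with its natural
`D`-vector space structure. -/
def zeroSetSubmodule (D : Type u) [DivisionRing D] {I : Type u} (F : Filter I) :
    Submodule D (I → D) where
  carrier := {f | {i | f i = 0} ∈ F}
  zero_mem' := by simpa using Filter.univ_mem
  add_mem' := by
    intro f g hf hg
    refine Filter.mem_of_superset (Filter.inter_mem hf hg) (fun i hi => ?_)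
    have h1 : f i = 0 := hi.1
    have h2 : g i = 0 := hi.2
    show (f + g) i = 0
    simp [h1, h2]
  smul_mem' := by
    intro c f hf
    refine Filter.mem_of_superset hf (fun i hi => ?_)
    have h1 : f i = 0 := hi
    show (c • f) i = 0
    simp [h1]

open Cardinal

/-- Over a finite division ring, an infinite module has rank equal to its
cardinality. -/
lemma rank_eq_mk_of_finite_scalars (D : Type u) [DivisionRing D] [Finite D]
    (V : Type u) [AddCommGroup V] [Module D V] [Infinite V] :
    Module.rank D V = #V := by
  set B := Module.Free.ChooseBasisIndex D V with hB
  have e : V ≃ (B →₀ D) := (Module.Free.chooseBasis D V).repr.toEquiv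
  have hBinf : Infinite B := by
    by_contra h
    rw [not_infinite_iff_finite] at h
    have : Finite (B →₀ D) := Finite.of_equiv _ (Finsupp.equivFunOnFinite).symm
    have : Finite V := Finite.of_equiv _ e.symm
    exact not_finite V
  have hmk : #V = #(B →₀ D) := Cardinal.mk_congr e
  rw [Cardinal.mk_finsupp_of_infinite] at hmk
  have hD : #D < ℵ₀ := Cardinal.lt_aleph0_of_finite D
  have hBa : ℵ₀ ≤ #B := Cardinal.infinite_iff.mp hBinf
  have : max #B #D = #B := max_eq_left (le_trans hD.le hBa)
  rw [this] at hmk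
  rw [Module.Free.rank_eq_card_chooseBasisIndex, hmk]

/-- The limit of `f` along the ultrafilter `U`, when the codomain is finite. -/
noncomputable def ulim {I : Type u} {D : Type u} [Finite D] (U : Ultrafilter I)
    (f : I → D) : D :=
  (Ultrafilter.eq_pure_of_finite (U.map f)).choose

lemma ulim_spec {I : Type u} {D : Type u} [Finite D] (U : Ultrafilter I)
    (f : I → D) : {i | f i = ulim U f} ∈ U := by
  have h := (Ultrafilter.eq_pure_of_finite (U.map f)).choose_spec
  show f ⁻¹' {ulim U f} ∈ U
  rw [← Ultrafilter.mem_map, h]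
  simp
  rfl

lemma ulim_eq {I : Type u} {D : Type u} [Finite D] (U : Ultrafilter I)
    (f : I → D) {d : D} (h : {i | f i = d} ∈ U) : ulim U f = d := by
  have h2 := ulim_spec U f
  obtain ⟨i, hi1, hi2⟩ := Ultrafilter.nonempty_of_mem (U.inter_mem h h2)
  rw [← hi1, ← hi2]

lemma ulim_congr {I : Type u} {D : Type u} [Finite D] (U : Ultrafilter I)
    {f g : I → D} (h : {i | f i = g i} ∈ U) : ulim U f = ulim U g := by
  apply ulim_eq
  have := ulim_spec U g
  refine Filter.mem_of_superset (U.inter_mem h this) (fun i hi => ?_)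
  exact hi.1.trans hi.2

/-- Let `D` be a finite division ring (hence a finite field),
`I` a set, and `F` a filter on `I` which is not the intersection of finitely
many ultrafilters on `I`.  Then the dimension of the reduced power `D^I/F`
over `D` equals its cardinality. -/
theorem rank_reduced_power_eq_card_finite_field (D : Type u) [DivisionRing D]
    [Finite D] {I : Type u} (F : Filter I)
    (hF : ¬ ∃ (n : ℕ) (U : Fin n → Ultrafilter I), F = ⨆ m, (U m : Filter I)) :
    Module.rank D ((I → D) ⧸ zeroSetSubmodule D F)
      = Cardinal.mk ((I → D) ⧸ zeroSetSubmodule D F) := by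
  classical
  set Q := (I → D) ⧸ zeroSetSubmodule D F with hQ
  cases finite_or_infinite Q with
  | inr h => exact rank_eq_mk_of_finite_scalars D Q
  | inl h =>
    -- Finite quotient: show F is a finite sup of ultrafilters, contradiction.
    exfalso
    apply hF
    -- the map sending an ultrafilter below F to its limit functional on Q
    set S := {U : Ultrafilter I // (U : Filter I) ≤ F} with hS
    have key : ∀ (U : S) (s : Set I), s ∈ U.1 →
        ulim U.1 (Quotient.out (Submodule.Quotient.mk
          (p := zeroSetSubmodule D F) (fun i => if i ∈ s then (1 : D) else 0)))
          = 1 := by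
      intro U s hs
      set f : I → D := fun i => if i ∈ s then (1 : D) else 0 with hf
      set g : I → D := Quotient.out (Submodule.Quotient.mk
          (p := zeroSetSubmodule D F) f) with hg
      have hgf : {i | g i = f i} ∈ F := by
        have : Submodule.Quotient.mk (p := zeroSetSubmodule D F) g
            = Submodule.Quotient.mk f := Quotient.out_eq' _
        have hmem := (Submodule.Quotient.eq (zeroSetSubmodule D F)).mp this
        refine Filter.mem_of_superset hmem (fun i hi => ?_)
        have : g i - f i = 0 := hi
        simpa [sub_eq_zero] using this
      have h1 : {i | f i = 1} ∈ U.1 := by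
        refine Filter.mem_of_superset hs (fun i hi => ?_)
        simp [hf, hi]
      have h2 : {i | g i = 1} ∈ U.1 := by
        refine Filter.mem_of_superset
          (Filter.inter_mem (U.2 hgf) h1) (fun i hi => ?_)
        exact hi.1.trans hi.2
      exact ulim_eq _ _ h2
    have hinj : Function.Injective
        (fun (U : S) => (fun q : Q => ulim U.1 (Quotient.out q))) := by
      intro U V hUV
      by_contra hne
      have hne' : U.1 ≠ V.1 := fun h' => hne (Subtype.ext h')
      -- find a set in U not in V
      have : ∃ s : Set I, s ∈ U.1 ∧ s ∉ V.1 := by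
        by_contra hc
        push_neg at hc
        have hle : (V.1 : Filter I) ≤ (U.1 : Filter I) := fun s hs => hc s hs
        exact hne' (Ultrafilter.coe_injective (U.1.unique hle)).symm
      obtain ⟨s, hsU, hsV⟩ := this
      have hscV : sᶜ ∈ V.1 := Ultrafilter.compl_mem_iff_notMem.mpr hsV
      set f : I → D := fun i => if i ∈ s then (1 : D) else 0 with hf
      set q : Q := Submodule.Quotient.mk (p := zeroSetSubmodule D F) f with hq
      have e1 : ulim U.1 (Quotient.out q) = 1 := key U s hsU
      have e2 : ulim V.1 (Quotient.out q) = 0 := by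
        set g : I → D := Quotient.out q with hg
        have hgf : {i | g i = f i} ∈ F := by
          have : Submodule.Quotient.mk (p := zeroSetSubmodule D F) g
              = Submodule.Quotient.mk f := Quotient.out_eq' _
          have hmem := (Submodule.Quotient.eq (zeroSetSubmodule D F)).mp this
          refine Filter.mem_of_superset hmem (fun i hi => ?_)
          have : g i - f i = 0 := hi
          simpa [sub_eq_zero] using this
        have h1 : {i | f i = 0} ∈ V.1 := by
          refine Filter.mem_of_superset hscV (fun i hi => ?_)
          have hns : i ∉ s := hi
          simp [hf, hns]
        have h2 : {i | g i = 0} ∈ V.1 := by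
          refine Filter.mem_of_superset
            (Filter.inter_mem (V.2 hgf) h1) (fun i hi => ?_)
          exact hi.1.trans hi.2
        exact ulim_eq _ _ h2
      have : (1 : D) = 0 := by
        calc (1 : D) = ulim U.1 (Quotient.out q) := e1.symm
          _ = ulim V.1 (Quotient.out q) := congrFun hUV q
          _ = 0 := e2
      exact one_ne_zero this
    have hSfin : Finite S := Finite.of_injective _ hinj
    obtain ⟨n, ⟨e⟩⟩ := Finite.exists_equiv_fin S
    refine ⟨n, fun m => (e.symm m).1, ?_⟩
    have h1 : (⨆ m, ((e.symm m).1 : Filter I)) = ⨆ (U : S), (U.1 : Filter I) :=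
      e.symm.surjective.iSup_congr _ (fun m => rfl)
    have h2 : (⨆ (U : S), (U.1 : Filter I))
        = ⨆ (g : Ultrafilter I) (_ : (g : Filter I) ≤ F), (g : Filter I) :=
      (iSup_subtype'
        (f := fun (g : Ultrafilter I) (_ : (g : Filter I) ≤ F) => (g : Filter I))).symm
    rw [h1, h2, Filter.iSup_ultrafilter_le_eq]
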